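/- The square of the massless staggered fermion Hamiltonian is the discrete Laplacian: H_{KS;h}² = ∑_{j=1}^d D^-_{2h;j} D^+_{2h;j} ⊗ I on ℓ²(2hℤ^d) ⊗ ℂ^Λ, i.e., (H_{KS;h}² f)_a(z) = ∑_{j=1}^d (1/(2h)²)(2f_a(z) - f_a(z+2he_j) - f_a(z-2he_j)). -/
import Mathlib

noncomputable section

/-- The `j`-th standard basis vector of `ℤ^d`. -/
def e (d : ℕ) (j : Fin d) : Fin d → ℤ := Pi.single j 1

/-- `s_{j-1}(a)` for `a ∈ Λ = {0,1}^d`. -/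
def sL (d : ℕ) (j : Fin d) (a : Fin d → Fin 2) : ℕ :=
  ∑ k ∈ Finset.univ.filter (fun k : Fin d => k < j), (a k : ℕ)

/-- Forward difference `D^+_{2h;j}` on functions on `2hℤ^d` (indexed by `ℤ^d`). -/
def Dp2 (d : ℕ) (h : ℝ) (j : Fin d) (v : (Fin d → ℤ) → ℂ) : (Fin d → ℤ) → ℂ :=
  fun m => (1 / (2 * Complex.I * h)) * (v (m + e d j) - v m)

/-- Backward difference `D^-_{2h;j}` on functions on `2hℤ^d`. -/
def Dm2 (d : ℕ) (h : ℝ) (j : Fin d) (v : (Fin d → ℤ) → ℂ) : (Fin d → ℤ) → ℂ :=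
  fun m => (1 / (2 * Complex.I * h)) * (v m - v (m - e d j))

/-- The massless staggered fermion Hamiltonian `H_{KS;h}` on `ℓ²(2hℤ^d) ⊗ ℂ^Λ`. -/
def HKS (d : ℕ) (h : ℝ) (w : (Fin d → Fin 2) → (Fin d → ℤ) → ℂ) :
    (Fin d → Fin 2) → (Fin d → ℤ) → ℂ :=
  fun a m => ∑ j : Fin d,
    if a j = 1 then
      ((-1 : ℂ) ^ (sL d j a)) * Dp2 d h j (w (Function.update a j 0)) m
    else
      ((-1 : ℂ) ^ (sL d j a)) * Dm2 d h j (w (Function.update a j 1)) m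

/-- flip on Fin 2 -/
def fl (x : Fin 2) : Fin 2 := if x = 1 then 0 else 1

lemma fin2 (x : Fin 2) : x = 0 ∨ x = 1 := by omega

lemma fl_ne (x : Fin 2) : fl x ≠ x := by revert x; decide

/-- select forward/backward difference -/
def Dsel (d : ℕ) (h : ℝ) (j : Fin d) (x : Fin 2) : ((Fin d → ℤ) → ℂ) → (Fin d → ℤ) → ℂ :=
  if x = 1 then Dp2 d h j else Dm2 d h j

/-- single-direction term of HKS -/
def T (d : ℕ) (h : ℝ) (j : Fin d) (w : (Fin d → Fin 2) → (Fin d → ℤ) → ℂ) :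
    (Fin d → Fin 2) → (Fin d → ℤ) → ℂ :=
  fun a m =>
    if a j = 1 then ((-1 : ℂ) ^ (sL d j a)) * Dp2 d h j (w (Function.update a j 0)) m
    else ((-1 : ℂ) ^ (sL d j a)) * Dm2 d h j (w (Function.update a j 1)) m

lemma T_eq (d : ℕ) (h : ℝ) (j : Fin d) (w) (a : Fin d → Fin 2) (m) :
    T d h j w a m
      = ((-1 : ℂ) ^ (sL d j a)) * Dsel d h j (a j) (w (Function.update a j (fl (a j)))) m := by
  rcases fin2 (a j) with hx | hx <;> simp [T, Dsel, fl, hx]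

lemma Dsel_smul (d : ℕ) (h : ℝ) (j : Fin d) (x : Fin 2) (c : ℂ) (v : (Fin d → ℤ) → ℂ) (m) :
    Dsel d h j x (fun z => c * v z) m = c * Dsel d h j x v m := by
  rcases fin2 x with hx | hx <;> simp [Dsel, Dp2, Dm2, hx] <;> ring

lemma Dsel_comm (d : ℕ) (h : ℝ) (j k : Fin d) (x y : Fin 2) (v : (Fin d → ℤ) → ℂ) (m) :
    Dsel d h j x (Dsel d h k y v) m = Dsel d h k y (Dsel d h j x v) m := by
  rcases fin2 x with hx | hx <;> rcases fin2 y with hy | hy <;>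
    simp [Dsel, Dp2, Dm2, hx, hy] <;> ring_nf <;> tauto

lemma sL_update_of_not_lt {d : ℕ} {j k : Fin d} (hkj : ¬ k < j) (a : Fin d → Fin 2) (x : Fin 2) :
    sL d j (Function.update a k x) = sL d j a := by
  unfold sL
  refine Finset.sum_congr rfl fun i hi => ?_
  simp only [Finset.mem_filter] at hi
  rw [Function.update_of_ne (by rintro rfl; exact hkj hi.2)]

lemma sL_update_add {d : ℕ} {j k : Fin d} (hkj : k < j) (a : Fin d → Fin 2) (x : Fin 2) :
    sL d j (Function.update a k x) + (a k : ℕ) = sL d j a + (x : ℕ) := by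
  unfold sL
  have hmem : k ∈ Finset.univ.filter (fun i : Fin d => i < j) := by simp [hkj]
  have hfun : (fun i => ((Function.update a k x i : Fin 2) : ℕ))
      = Function.update (fun i => ((a i : Fin 2) : ℕ)) k ((x : Fin 2) : ℕ) := by
    ext i
    rcases eq_or_ne i k with rfl | hne
    · simp
    · simp [Function.update_of_ne hne]
  rw [hfun, Finset.sum_update_of_mem hmem]
  conv_rhs => rw [← Finset.add_sum_erase _ _ hmem]
  rw [Finset.erase_eq]
  ring

lemma pow_sL_update_flip {d : ℕ} {j k : Fin d} (hkj : k < j) (a : Fin d → Fin 2)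
    {x : Fin 2} (hx : x ≠ a k) :
    ((-1 : ℂ)) ^ (sL d j (Function.update a k x)) = -((-1 : ℂ)) ^ (sL d j a) := by
  have hadd := sL_update_add hkj a x
  have h1 : ((-1 : ℂ)) ^ (sL d j (Function.update a k x)) * ((-1:ℂ)) ^ ((a k : ℕ))
      = ((-1:ℂ)) ^ (sL d j a) * ((-1:ℂ)) ^ ((x : ℕ)) := by
    rw [← pow_add, ← pow_add, hadd]
  have hx' : ((-1 : ℂ)) ^ ((x : ℕ)) = -((-1 : ℂ)) ^ ((a k : ℕ)) := by
    rcases fin2 x with h0 | h0 <;> rcases fin2 (a k) with g0 | g0 <;>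
      simp_all
  have hs0 : ((-1 : ℂ)) ^ ((a k : ℕ)) ≠ 0 := pow_ne_zero _ (by norm_num)
  apply mul_right_cancel₀ hs0
  rw [hx'] at h1
  linear_combination h1

lemma hI_sq (h : ℝ) : (1 / (2 * Complex.I * (h:ℝ))) * (1 / (2 * Complex.I * (h:ℂ)))
    = -((1 / (2 * (h:ℂ)))^2) := by
  rcases eq_or_ne (h:ℂ) 0 with h0 | h0
  · simp [h0]
  · field_simp
    ring_nf
    simp [Complex.I_sq]

lemma DmDp (d : ℕ) (h : ℝ) (j : Fin d) (v : (Fin d → ℤ) → ℂ) (m : Fin d → ℤ) :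
    Dm2 d h j (Dp2 d h j v) m
      = (1 / (2 * (h:ℂ)))^2 * (2 * v m - v (m + e d j) - v (m - e d j)) := by
  have harg : m - e d j + e d j = m := by abel
  simp only [Dm2, Dp2, harg]
  linear_combination (v (m + e d j) - 2 * v m + v (m - e d j)) * hI_sq h

lemma DpDm (d : ℕ) (h : ℝ) (j : Fin d) (v : (Fin d → ℤ) → ℂ) (m : Fin d → ℤ) :
    Dp2 d h j (Dm2 d h j v) m
      = (1 / (2 * (h:ℂ)))^2 * (2 * v m - v (m + e d j) - v (m - e d j)) := by
  have harg : m + e d j - e d j = m := by abel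
  simp only [Dm2, Dp2, harg]
  linear_combination (v (m + e d j) - 2 * v m + v (m - e d j)) * hI_sq h

lemma Dp2_sum {d : ℕ} (h : ℝ) (j : Fin d) (v : Fin d → (Fin d → ℤ) → ℂ) (m : Fin d → ℤ) :
    Dp2 d h j (fun z => ∑ k, v k z) m = ∑ k, Dp2 d h j (v k) m := by
  simp only [Dp2]
  rw [← Finset.sum_sub_distrib, Finset.mul_sum]

lemma Dm2_sum {d : ℕ} (h : ℝ) (j : Fin d) (v : Fin d → (Fin d → ℤ) → ℂ) (m : Fin d → ℤ) :
    Dm2 d h j (fun z => ∑ k, v k z) m = ∑ k, Dm2 d h j (v k) m := by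
  simp only [Dm2]
  rw [← Finset.sum_sub_distrib, Finset.mul_sum]

lemma T_sum (d : ℕ) (h : ℝ) (j : Fin d) (W : Fin d → (Fin d → Fin 2) → (Fin d → ℤ) → ℂ)
    (a : Fin d → Fin 2) (m : Fin d → ℤ) :
    T d h j (fun a m => ∑ k, W k a m) a m = ∑ k, T d h j (W k) a m := by
  rcases fin2 (a j) with hx | hx <;>
    simp [T, hx, Dp2_sum, Dm2_sum, Finset.mul_sum]

lemma T_diag (d : ℕ) (h : ℝ) (j : Fin d) (w : (Fin d → Fin 2) → (Fin d → ℤ) → ℂ)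
    (a : Fin d → Fin 2) (m : Fin d → ℤ) :
    T d h j (T d h j w) a m
      = (1 / (2 * (h:ℂ)))^2 * (2 * w a m - w a (m + e d j) - w a (m - e d j)) := by
  have hone : ((-1:ℂ))^(sL d j a) * ((-1:ℂ))^(sL d j a) = 1 := by
    rw [← pow_add, ← two_mul, pow_mul]; norm_num
  rcases fin2 (a j) with hx | hx
  · have huu : Function.update (Function.update a j 1) j 0 = a := by
      rw [Function.update_idem, ← hx, Function.update_eq_self]
    have hs : sL d j (Function.update a j 1) = sL d j a :=
      sL_update_of_not_lt (lt_irrefl j) a 1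
    have hinner : (T d h j w (Function.update a j 1))
        = fun z => ((-1:ℂ))^(sL d j a) * Dp2 d h j (w a) z := by
      funext z
      simp [T, Function.update_self, hs, huu]
    simp only [T, hx]
    norm_num
    rw [hinner]
    have hsm : Dm2 d h j (fun z => ((-1:ℂ))^(sL d j a) * Dp2 d h j (w a) z) m
        = ((-1:ℂ))^(sL d j a) * Dm2 d h j (Dp2 d h j (w a)) m := by
      simp [Dm2]; ring
    rw [hsm, DmDp, ← mul_assoc, hone, one_mul]
    ring
  · have huu : Function.update (Function.update a j 0) j 1 = a := by
      rw [Function.update_idem, ← hx, Function.update_eq_self]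
    have hs : sL d j (Function.update a j 0) = sL d j a :=
      sL_update_of_not_lt (lt_irrefl j) a 0
    have hinner : (T d h j w (Function.update a j 0))
        = fun z => ((-1:ℂ))^(sL d j a) * Dm2 d h j (w a) z := by
      funext z
      simp [T, Function.update_self, hs, huu]
    simp only [T, hx]
    norm_num
    rw [hinner]
    have hsm : Dp2 d h j (fun z => ((-1:ℂ))^(sL d j a) * Dm2 d h j (w a) z) m
        = ((-1:ℂ))^(sL d j a) * Dp2 d h j (Dm2 d h j (w a)) m := by
      simp [Dp2]; ring
    rw [hsm, DpDm, ← mul_assoc, hone, one_mul]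
    ring

lemma T_cross (d : ℕ) (h : ℝ) {j k : Fin d} (hjk : j ≠ k)
    (w : (Fin d → Fin 2) → (Fin d → ℤ) → ℂ) (a : Fin d → Fin 2) (m : Fin d → ℤ) :
    T d h j (T d h k w) a m = - T d h k (T d h j w) a m := by
  have hupdk : (Function.update a j (fl (a j))) k = a k :=
    Function.update_of_ne (Ne.symm hjk) _ a
  have hupdj : (Function.update a k (fl (a k))) j = a j :=
    Function.update_of_ne hjk _ a
  rw [T_eq, T_eq]
  have e1 : (T d h k w (Function.update a j (fl (a j))))
      = fun z => ((-1:ℂ) ^ (sL d k (Function.update a j (fl (a j))))) *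
          Dsel d h k (a k)
            (w (Function.update (Function.update a j (fl (a j))) k (fl (a k)))) z := by
    funext z; rw [T_eq, hupdk]
  have e2 : (T d h j w (Function.update a k (fl (a k))))
      = fun z => ((-1:ℂ) ^ (sL d j (Function.update a k (fl (a k))))) *
          Dsel d h j (a j)
            (w (Function.update (Function.update a k (fl (a k))) j (fl (a j)))) z := by
    funext z; rw [T_eq, hupdj]
  rw [e1, e2, Dsel_smul, Dsel_smul]
  rw [Function.update_comm hjk]
  rw [Dsel_comm]
  rcases hjk.lt_or_gt with hlt | hlt
  · rw [pow_sL_update_flip hlt a (fl_ne (a j)),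
      sL_update_of_not_lt (not_lt.mpr hlt.le) a (fl (a k))]
    ring
  · rw [pow_sL_update_flip hlt a (fl_ne (a k)),
      sL_update_of_not_lt (not_lt.mpr hlt.le) a (fl (a j))]
    ring

lemma sum_antisym {d : ℕ} (f : Fin d → Fin d → ℂ) (hf : ∀ j k, f j k = - f k j) :
    ∑ j : Fin d, ∑ k : Fin d, f j k = 0 := by
  have h1 : ∑ j : Fin d, ∑ k : Fin d, f j k = ∑ k : Fin d, ∑ j : Fin d, f j k :=
    Finset.sum_comm
  have h2 : ∑ k : Fin d, ∑ j : Fin d, f j k = -∑ j : Fin d, ∑ k : Fin d, f j k := by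
    rw [← Finset.sum_neg_distrib]
    refine Finset.sum_congr rfl fun k _ => ?_
    rw [← Finset.sum_neg_distrib]
    exact Finset.sum_congr rfl fun j _ => (hf j k).symm ▸ rfl
  have h3 := h1.trans h2
  linear_combination h3 / 2

/-- `H_{KS;h}² = ∑_j D^-_{2h;j} D^+_{2h;j} ⊗ I` is the discrete Laplacian:
`(H_{KS;h}² w)_a(z) = ∑_j (1/(2h))² (2 w_a(z) - w_a(z+2he_j) - w_a(z-2he_j))`. -/
theorem stmt16 (d : ℕ) (hd : 1 ≤ d) (h : ℝ) (hh : 0 < h)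
    (w : (Fin d → Fin 2) → (Fin d → ℤ) → ℂ) (a : Fin d → Fin 2) (m : Fin d → ℤ) :
    HKS d h (HKS d h w) a m
      = ∑ j : Fin d, (1 / (2 * (h : ℂ))) ^ 2 *
          (2 * w a m - w a (m + e d j) - w a (m - e d j)) := by
  have key : HKS d h (HKS d h w) a m
      = ∑ j : Fin d, ∑ k : Fin d, T d h j (T d h k w) a m := by
    show (∑ j : Fin d, T d h j (fun a m => ∑ k : Fin d, T d h k w a m) a m) = _
    exact Finset.sum_congr rfl fun j _ => T_sum d h j _ a m
  rw [key]
  set D : Fin d → ℂ := fun j => (1 / (2 * (h : ℂ))) ^ 2 *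
      (2 * w a m - w a (m + e d j) - w a (m - e d j)) with hD
  have hz : ∑ j : Fin d, ∑ k : Fin d,
      (T d h j (T d h k w) a m - if j = k then D j else 0) = 0 := by
    apply sum_antisym
    intro j k
    rcases eq_or_ne j k with rfl | hjk
    · simp [T_diag, hD]
    · simp only [if_neg hjk, if_neg (Ne.symm hjk), sub_zero]
      rw [T_cross d h hjk]
  have h3 : ∑ j : Fin d, ∑ k : Fin d, T d h j (T d h k w) a m
      - ∑ j : Fin d, ∑ k : Fin d, (if j = k then D j else 0) = 0 := by
    rw [← Finset.sum_sub_distrib]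
    simp_rw [← Finset.sum_sub_distrib]
    exact hz
  rw [sub_eq_zero.mp h3]
  refine Finset.sum_congr rfl fun j _ => ?_
  simp [hD]
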